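/- Let X be a real vector space and E a Dedekind complete vector lattice. The set QL(X,E) of differences of sublinear operators from X to E is closed under addition, under multiplication by any orthomorphism α of E (namely α ∘ f ∈ QL(X,E) when f ∈ QL(X,E)), and under pointwise finite suprema and infima; in particular it is a module over the orthomorphism algebra of E. -/

import Mathlib

section QL

set_option linter.unusedSectionVars false

variable {X E : Type*} [AddCommGroup X] [Module ℝ X]
  [Lattice E] [AddCommGroup E] [CovariantClass E E (· + ·) (· ≤ ·)] [Module ℝ E]

/-- A sublinear operator: subadditive and positively homogeneous. -/
def Sublinear (p : X → E) : Prop :=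
  (∀ x y : X, p (x + y) ≤ p x + p y) ∧
  (∀ (l : ℝ), 0 ≤ l → ∀ x : X, p (l • x) = l • p x)

/-- A quasilinear operator: a (pointwise) difference of sublinear operators. -/
def IsQL (f : X → E) : Prop :=
  ∃ p q : X → E, Sublinear p ∧ Sublinear q ∧ ∀ x : X, f x = p x - q x

/-- Order boundedness of a linear endomorphism. -/
def OrdBounded (T : E →ₗ[ℝ] E) : Prop :=
  ∀ a b : E, ∃ c d : E, ∀ x : E, x ∈ Set.Icc a b → T x ∈ Set.Icc c d

/-- An orthomorphism: an order bounded, band-preserving linear endomorphism. -/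
def IsOrthomorphism (T : E →ₗ[ℝ] E) : Prop :=
  OrdBounded T ∧
  ∀ x y : E, (x ⊔ -x) ⊓ (y ⊔ -y) = 0 → ((T x) ⊔ -(T x)) ⊓ (y ⊔ -y) = 0

/-! ### Auxiliary lemmas -/

lemma aux_smul_sup (hsmul : ∀ (l : ℝ), 0 ≤ l → ∀ x y : E, x ≤ y → l • x ≤ l • y)
    {l : ℝ} (hl : 0 ≤ l) (a b : E) : l • (a ⊔ b) = l • a ⊔ l • b := by
  rcases eq_or_lt_of_le hl with rfl | hl'
  · simp
  · apply le_antisymm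
    · have h1 : a ⊔ b ≤ l⁻¹ • (l • a ⊔ l • b) := by
        apply sup_le
        · have := hsmul l⁻¹ (inv_nonneg.2 hl) (l • a) (l • a ⊔ l • b) le_sup_left
          rwa [inv_smul_smul₀ hl'.ne'] at this
        · have := hsmul l⁻¹ (inv_nonneg.2 hl) (l • b) (l • a ⊔ l • b) le_sup_right
          rwa [inv_smul_smul₀ hl'.ne'] at this
      have := hsmul l hl _ _ h1
      rwa [smul_inv_smul₀ hl'.ne'] at this
    · exact sup_le (hsmul l hl a _ le_sup_left) (hsmul l hl b _ le_sup_right)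

lemma aux_sublinear_add {p q : X → E} (hp : Sublinear p) (hq : Sublinear q) :
    Sublinear (fun x => p x + q x) := by
  constructor
  · intro x y
    calc p (x + y) + q (x + y) ≤ (p x + p y) + (q x + q y) :=
          add_le_add (hp.1 x y) (hq.1 x y)
      _ = (p x + q x) + (p y + q y) := by abel
  · intro l hl x
    simp only [hp.2 l hl, hq.2 l hl, smul_add]

lemma aux_sublinear_sup (hsmul : ∀ (l : ℝ), 0 ≤ l → ∀ x y : E, x ≤ y → l • x ≤ l • y)
    {p q : X → E} (hp : Sublinear p) (hq : Sublinear q) :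
    Sublinear (fun x => p x ⊔ q x) := by
  constructor
  · intro x y
    calc p (x + y) ⊔ q (x + y) ≤ (p x + p y) ⊔ (q x + q y) :=
          sup_le_sup (hp.1 x y) (hq.1 x y)
      _ ≤ (p x ⊔ q x) + (p y ⊔ q y) :=
          sup_le (add_le_add le_sup_left le_sup_left) (add_le_add le_sup_right le_sup_right)
  · intro l hl x
    simp only [hp.2 l hl, hq.2 l hl, aux_smul_sup hsmul hl]

lemma aux_exists_phi
    (hDC : ∀ s : Set E, s.Nonempty → BddAbove s → ∃ a, IsLUB s a)
    (β : E →ₗ[ℝ] E) (hβ : OrdBounded β) :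
    ∃ φ : E → E, ∀ a, 0 ≤ a → IsLUB (β '' Set.Icc 0 a) (φ a) := by
  have h : ∀ a : E, ∃ u : E, 0 ≤ a → IsLUB (β '' Set.Icc 0 a) u := by
    intro a
    by_cases ha : 0 ≤ a
    · obtain ⟨c, d, hcd⟩ := hβ 0 a
      obtain ⟨u, hu⟩ := hDC (β '' Set.Icc 0 a)
        ⟨β 0, ⟨0, ⟨le_rfl, ha⟩, rfl⟩⟩
        ⟨d, by rintro y ⟨v, hv, rfl⟩; exact (hcd v hv).2⟩
      exact ⟨u, fun _ => hu⟩
    · exact ⟨0, fun h' => absurd h' ha⟩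
  choose φ hφ using h
  exact ⟨φ, hφ⟩

section phi

variable {β : E →ₗ[ℝ] E} {φ : E → E}

lemma aux_phi_nonneg (hφ : ∀ a, 0 ≤ a → IsLUB (β '' Set.Icc 0 a) (φ a))
    {a : E} (ha : 0 ≤ a) : 0 ≤ φ a := by
  have := (hφ a ha).1 ⟨0, ⟨le_rfl, ha⟩, rfl⟩
  rwa [map_zero] at this

lemma aux_phi_zero (hφ : ∀ a, 0 ≤ a → IsLUB (β '' Set.Icc 0 a) (φ a)) : φ 0 = 0 := by
  refine (hφ 0 le_rfl).unique ⟨?_, ?_⟩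
  · rintro y ⟨v, ⟨h0, h1⟩, rfl⟩
    have hv : v = 0 := le_antisymm h1 h0
    simp [hv]
  · intro u hu
    have := hu ⟨0, ⟨le_rfl, le_rfl⟩, rfl⟩
    rwa [map_zero] at this

lemma aux_phi_add (hφ : ∀ a, 0 ≤ a → IsLUB (β '' Set.Icc 0 a) (φ a))
    {a b : E} (ha : 0 ≤ a) (hb : 0 ≤ b) : φ (a + b) = φ a + φ b := by
  have hab : (0:E) ≤ a + b := add_nonneg ha hb
  apply le_antisymm
  · apply (hφ _ hab).2
    rintro y ⟨v, ⟨h0, h1⟩, rfl⟩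
    have hv1 : β v = β (v ⊓ a) + β (v - v ⊓ a) := by
      rw [← map_add]; congr 1; abel
    rw [hv1]
    apply add_le_add
    · exact (hφ a ha).1 ⟨v ⊓ a, ⟨le_inf h0 ha, inf_le_right⟩, rfl⟩
    · refine (hφ b hb).1 ⟨v - v ⊓ a, ⟨?_, ?_⟩, rfl⟩
      · exact sub_nonneg.2 inf_le_left
      · rw [sub_le_comm]
        exact le_inf (sub_le_self _ hb) (sub_le_iff_le_add.2 h1)
  · have key : ∀ z ∈ β '' Set.Icc 0 b, z ≤ φ (a + b) - φ a := by
      rintro z ⟨w, ⟨hw0, hw1⟩, rfl⟩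
      rw [le_sub_iff_add_le, add_comm, ← le_sub_iff_add_le]
      apply (hφ a ha).2
      rintro y ⟨v, ⟨hv0, hv1⟩, rfl⟩
      rw [le_sub_iff_add_le, ← map_add]
      exact (hφ _ hab).1 ⟨v + w, ⟨add_nonneg hv0 hw0, add_le_add hv1 hw1⟩, rfl⟩
    rw [add_comm, ← le_sub_iff_add_le]
    exact (hφ b hb).2 key

lemma aux_phi_smul (hsmul : ∀ (l : ℝ), 0 ≤ l → ∀ x y : E, x ≤ y → l • x ≤ l • y)
    (hφ : ∀ a, 0 ≤ a → IsLUB (β '' Set.Icc 0 a) (φ a))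
    {l : ℝ} (hl : 0 ≤ l) {a : E} (ha : 0 ≤ a) : φ (l • a) = l • φ a := by
  rcases eq_or_lt_of_le hl with rfl | hl'
  · rw [zero_smul, zero_smul, aux_phi_zero hφ]
  · have hla : (0:E) ≤ l • a := by
      have := hsmul l hl 0 a ha; rwa [smul_zero] at this
    refine (hφ _ hla).unique ⟨?_, ?_⟩
    · rintro y ⟨v, ⟨hv0, hv1⟩, rfl⟩
      have hw0 : (0:E) ≤ l⁻¹ • v := by
        have := hsmul l⁻¹ (inv_nonneg.2 hl) 0 v hv0; rwa [smul_zero] at this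
      have hw1 : l⁻¹ • v ≤ a := by
        have := hsmul l⁻¹ (inv_nonneg.2 hl) v (l • a) hv1
        rwa [inv_smul_smul₀ hl'.ne'] at this
      have hmem := (hφ a ha).1 ⟨l⁻¹ • v, ⟨hw0, hw1⟩, rfl⟩
      have := hsmul l hl _ _ hmem
      rwa [← map_smul, smul_inv_smul₀ hl'.ne'] at this
    · intro u hu
      have hub : φ a ≤ l⁻¹ • u := by
        apply (hφ a ha).2
        rintro y ⟨w, ⟨hw0, hw1⟩, rfl⟩
        have h1 : β (l • w) ≤ u := by
          refine hu ⟨l • w, ⟨?_, hsmul l hl w a hw1⟩, rfl⟩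
          have := hsmul l hl 0 w hw0; rwa [smul_zero] at this
        have := hsmul l⁻¹ (inv_nonneg.2 hl) _ _ h1
        rwa [map_smul, inv_smul_smul₀ hl'.ne'] at this
      have := hsmul l hl _ _ hub
      rwa [smul_inv_smul₀ hl'.ne'] at this

end phi

/-- The positive-part relation between the sup-functions of `α` and `-α`. -/
lemma aux_phi_neg_rel {α : E →ₗ[ℝ] E} {φp φm : E → E}
    (hφp : ∀ a, 0 ≤ a → IsLUB (α '' Set.Icc 0 a) (φp a))
    (hφm : ∀ a, 0 ≤ a → IsLUB ((-α) '' Set.Icc 0 a) (φm a))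
    {a : E} (ha : 0 ≤ a) : φm a = φp a - α a := by
  refine (hφm a ha).unique ⟨?_, ?_⟩
  · rintro y ⟨v, ⟨hv0, hv1⟩, rfl⟩
    have h1 : α (a - v) ≤ φp a :=
      (hφp a ha).1 ⟨a - v, ⟨sub_nonneg.2 hv1, sub_le_self a hv0⟩, rfl⟩
    rw [map_sub] at h1
    have h2 := sub_le_sub_right h1 (α a)
    calc (-α) v = α a - α v - α a := by rw [LinearMap.neg_apply]; abel
      _ ≤ φp a - α a := h2
  · intro u hu
    rw [sub_le_iff_le_add]
    apply (hφp a ha).2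
    rintro y ⟨w, ⟨hw0, hw1⟩, rfl⟩
    have h1 : (-α) (a - w) ≤ u :=
      hu ⟨a - w, ⟨sub_nonneg.2 hw1, sub_le_self a hw0⟩, rfl⟩
    have h1' : α w - α a ≤ u := by
      calc α w - α a = (-α) (a - w) := by rw [LinearMap.neg_apply, map_sub]; abel
        _ ≤ u := h1
    exact sub_le_iff_le_add.mp h1'

/-- From the sup-function on the positive cone, build a globally defined additive,
monotone, positively homogeneous map. -/
lemma aux_mk_S (hsmul : ∀ (l : ℝ), 0 ≤ l → ∀ x y : E, x ≤ y → l • x ≤ l • y)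
    {β : E →ₗ[ℝ] E} {φ : E → E}
    (hφ : ∀ a, 0 ≤ a → IsLUB (β '' Set.Icc 0 a) (φ a)) :
    ∃ S : E → E, (∀ a b, S (a + b) = S a + S b) ∧ (∀ a b, a ≤ b → S a ≤ S b) ∧
      (∀ l : ℝ, 0 ≤ l → ∀ a, S (l • a) = l • S a) ∧ (∀ a, 0 ≤ a → S a = φ a) := by
  set S : E → E := fun e => φ (e⁺) - φ (e⁻) with hSdef
  have hS0 : ∀ a : E, 0 ≤ a → S a = φ a := by
    intro a ha
    simp only [hSdef, posPart_eq_self.mpr ha, negPart_eq_zero.mpr ha, aux_phi_zero hφ,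
      sub_zero]
  have hSadd : ∀ x y : E, S (x + y) = S x + S y := by
    intro x y
    have hkey : ∀ a b c d : E, 0 ≤ a → 0 ≤ b → 0 ≤ c → 0 ≤ d → a + d = c + b →
        φ a - φ b = φ c - φ d := by
      intro a b c d ha hb hc hd h
      rw [sub_eq_sub_iff_add_eq_add, ← aux_phi_add hφ ha hd, ← aux_phi_add hφ hc hb, h]
    have h0 : (x + y)⁺ + (x⁻ + y⁻) = (x⁺ + y⁺) + (x + y)⁻ := by
      have hz : ((x + y)⁺ + (x⁻ + y⁻)) - ((x⁺ + y⁺) + (x + y)⁻) = 0 := by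
        calc ((x + y)⁺ + (x⁻ + y⁻)) - ((x⁺ + y⁺) + (x + y)⁻)
            = ((x + y)⁺ - (x + y)⁻) - ((x⁺ - x⁻) + (y⁺ - y⁻)) := by abel
          _ = (x + y) - (x + y) := by
              rw [posPart_sub_negPart, posPart_sub_negPart, posPart_sub_negPart]
          _ = 0 := by abel
      exact sub_eq_zero.mp hz
    have h1 := hkey ((x + y)⁺) ((x + y)⁻) (x⁺ + y⁺) (x⁻ + y⁻)
      (posPart_nonneg _) (negPart_nonneg _)
      (add_nonneg (posPart_nonneg _) (posPart_nonneg _))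
      (add_nonneg (negPart_nonneg _) (negPart_nonneg _)) h0
    show φ ((x + y)⁺) - φ ((x + y)⁻) = (φ (x⁺) - φ (x⁻)) + (φ (y⁺) - φ (y⁻))
    rw [h1, aux_phi_add hφ (posPart_nonneg x) (posPart_nonneg y),
      aux_phi_add hφ (negPart_nonneg x) (negPart_nonneg y)]
    abel
  have hSmono : ∀ a b : E, a ≤ b → S a ≤ S b := by
    intro a b hab
    have h1 : S b = S (b - a) + S a := by
      rw [← hSadd]; congr 1; abel
    have h2 : 0 ≤ S (b - a) := by
      rw [hS0 _ (sub_nonneg.2 hab)]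
      exact aux_phi_nonneg hφ (sub_nonneg.2 hab)
    calc S a = 0 + S a := by abel
      _ ≤ S (b - a) + S a := add_le_add_left h2 _
      _ = S b := h1.symm
  have hShom : ∀ l : ℝ, 0 ≤ l → ∀ a : E, S (l • a) = l • S a := by
    intro l hl e
    have hp : (l • e)⁺ = l • e⁺ := by
      rw [posPart_def, posPart_def, aux_smul_sup hsmul hl, smul_zero]
    have hn : (l • e)⁻ = l • e⁻ := by
      rw [negPart_def, negPart_def, ← smul_neg, aux_smul_sup hsmul hl, smul_zero]
    show φ ((l • e)⁺) - φ ((l • e)⁻) = l • (φ (e⁺) - φ (e⁻))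
    rw [hp, hn, aux_phi_smul hsmul hφ hl (posPart_nonneg e),
      aux_phi_smul hsmul hφ hl (negPart_nonneg e), smul_sub]
  exact ⟨S, hSadd, hSmono, hShom, hS0⟩

/-- Decomposition of an order bounded linear endomorphism as a difference of
additive, monotone, positively homogeneous maps. -/
lemma aux_decomp
    (hDC : ∀ s : Set E, s.Nonempty → BddAbove s → ∃ a, IsLUB s a)
    (hsmul : ∀ (l : ℝ), 0 ≤ l → ∀ x y : E, x ≤ y → l • x ≤ l • y)
    (α : E →ₗ[ℝ] E) (hα : OrdBounded α) :
    ∃ S T : E → E, (∀ a b, S (a + b) = S a + S b) ∧ (∀ a b, a ≤ b → S a ≤ S b) ∧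
      (∀ l : ℝ, 0 ≤ l → ∀ a, S (l • a) = l • S a) ∧
      (∀ a b, T (a + b) = T a + T b) ∧ (∀ a b, a ≤ b → T a ≤ T b) ∧
      (∀ l : ℝ, 0 ≤ l → ∀ a, T (l • a) = l • T a) ∧
      (∀ e, α e = S e - T e) := by
  have hα' : OrdBounded (-α) := by
    intro a b
    obtain ⟨c, d, hcd⟩ := hα a b
    refine ⟨-d, -c, fun x hx => ⟨?_, ?_⟩⟩
    · simp only [LinearMap.neg_apply]
      exact neg_le_neg_iff.mpr (hcd x hx).2
    · simp only [LinearMap.neg_apply]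
      exact neg_le_neg_iff.mpr (hcd x hx).1
  obtain ⟨φp, hφp⟩ := aux_exists_phi hDC α hα
  obtain ⟨φm, hφm⟩ := aux_exists_phi hDC (-α) hα'
  obtain ⟨S, hSadd, hSmono, hShom, hS0⟩ := aux_mk_S hsmul hφp
  obtain ⟨T, hTadd, hTmono, hThom, hT0⟩ := aux_mk_S hsmul hφm
  refine ⟨S, T, hSadd, hSmono, hShom, hTadd, hTmono, hThom, ?_⟩
  intro e
  have hpos : ∀ a : E, 0 ≤ a → α a = S a - T a := by
    intro a ha
    rw [hS0 a ha, hT0 a ha, aux_phi_neg_rel hφp hφm ha]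
    abel
  have hSsub : S e = S (e⁺) - S (e⁻) := by
    have h := hSadd (e⁺ - e⁻) (e⁻)
    rw [sub_add_cancel, posPart_sub_negPart] at h
    rw [h]; abel
  have hTsub : T e = T (e⁺) - T (e⁻) := by
    have h := hTadd (e⁺ - e⁻) (e⁻)
    rw [sub_add_cancel, posPart_sub_negPart] at h
    rw [h]; abel
  have he : α e = α (e⁺) - α (e⁻) := by
    rw [← map_sub, posPart_sub_negPart]
  rw [he, hpos _ (posPart_nonneg e), hpos _ (negPart_nonneg e), hSsub, hTsub]
  abel

/-- `QL(X,E)` is closed under addition, under composition with any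
orthomorphism of `E`, and under pointwise (finite) suprema and infima; hence it is
a module over the orthomorphism algebra of `E`. -/
theorem stmt_12
    (hDC : ∀ s : Set E, s.Nonempty → BddAbove s → ∃ a, IsLUB s a)
    (hsmul : ∀ (l : ℝ), 0 ≤ l → ∀ x y : E, x ≤ y → l • x ≤ l • y) :
    (∀ f g : X → E, IsQL f → IsQL g → IsQL (fun x => f x + g x)) ∧
    (∀ α : E →ₗ[ℝ] E, IsOrthomorphism α →
      ∀ f : X → E, IsQL f → IsQL (fun x => α (f x))) ∧
    (∀ f g : X → E, IsQL f → IsQL g → IsQL (fun x => f x ⊔ g x)) ∧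
    (∀ f g : X → E, IsQL f → IsQL g → IsQL (fun x => f x ⊓ g x)) := by
  have hadd : ∀ f g : X → E, IsQL f → IsQL g → IsQL (fun x => f x + g x) := by
    rintro f g ⟨p, q, hp, hq, hf⟩ ⟨r, s, hr, hs, hg⟩
    refine ⟨fun x => p x + r x, fun x => q x + s x,
      aux_sublinear_add hp hr, aux_sublinear_add hq hs, fun x => ?_⟩
    show f x + g x = (p x + r x) - (q x + s x)
    rw [hf x, hg x]; abel
  have hsup : ∀ f g : X → E, IsQL f → IsQL g → IsQL (fun x => f x ⊔ g x) := by
    rintro f g ⟨p, q, hp, hq, hf⟩ ⟨r, s, hr, hs, hg⟩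
    refine ⟨fun x => (p x + s x) ⊔ (r x + q x), fun x => q x + s x,
      aux_sublinear_sup hsmul (aux_sublinear_add hp hs) (aux_sublinear_add hr hq),
      aux_sublinear_add hq hs, fun x => ?_⟩
    show f x ⊔ g x = (p x + s x) ⊔ (r x + q x) - (q x + s x)
    rw [hf x, hg x]
    have h1 : (p x - q x) ⊔ (r x - s x) + (q x + s x) = (p x + s x) ⊔ (r x + q x) := by
      rw [sup_add]
      congr 1 <;> abel
    exact eq_sub_of_add_eq h1
  refine ⟨hadd, ?_, hsup, ?_⟩
  · rintro α hα f ⟨p, q, hp, hq, hf⟩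
    obtain ⟨S, T, hSadd, hSmono, hShom, hTadd, hTmono, hThom, hdec⟩ :=
      aux_decomp hDC hsmul α hα.1
    have hsubS : ∀ u : X → E, Sublinear u → Sublinear (fun x => S (u x)) := by
      intro u hu
      constructor
      · intro x y
        calc S (u (x + y)) ≤ S (u x + u y) := hSmono _ _ (hu.1 x y)
          _ = S (u x) + S (u y) := hSadd _ _
      · intro l hl x
        show S (u (l • x)) = l • S (u x)
        rw [hu.2 l hl, hShom l hl]
    have hsubT : ∀ u : X → E, Sublinear u → Sublinear (fun x => T (u x)) := by
      intro u hu
      constructor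
      · intro x y
        calc T (u (x + y)) ≤ T (u x + u y) := hTmono _ _ (hu.1 x y)
          _ = T (u x) + T (u y) := hTadd _ _
      · intro l hl x
        show T (u (l • x)) = l • T (u x)
        rw [hu.2 l hl, hThom l hl]
    refine ⟨fun x => S (p x) + T (q x), fun x => T (p x) + S (q x),
      aux_sublinear_add (hsubS p hp) (hsubT q hq),
      aux_sublinear_add (hsubT p hp) (hsubS q hq), fun x => ?_⟩
    show α (f x) = (S (p x) + T (q x)) - (T (p x) + S (q x))
    rw [hf x, map_sub, hdec (p x), hdec (q x)]
    abel
  · rintro f g hfQ hgQ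
    have hnegf : IsQL (fun x => -f x) := by
      obtain ⟨p, q, hp, hq, hf⟩ := hfQ
      exact ⟨q, p, hq, hp, fun x => by show -f x = q x - p x; rw [hf x]; abel⟩
    have hnegg : IsQL (fun x => -g x) := by
      obtain ⟨p, q, hp, hq, hg⟩ := hgQ
      exact ⟨q, p, hq, hp, fun x => by show -g x = q x - p x; rw [hg x]; abel⟩
    obtain ⟨P, Q, hP, hQ, hPQ⟩ := hsup _ _ hnegf hnegg
    refine ⟨Q, P, hQ, hP, fun x => ?_⟩
    show f x ⊓ g x = Q x - P x
    have h1 : f x ⊓ g x = -(-f x ⊔ -g x) := by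
      rw [neg_sup, neg_neg, neg_neg]
    have h2 : -f x ⊔ -g x = P x - Q x := hPQ x
    rw [h1, h2]
    abel

end QL
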